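/- Let R ∈ ℤ[A^{±1}][X₁,...,Xₙ] be a Laurent-polynomial-coefficient polynomial, and let ℱ ⊆ ℂ be the set of all complex roots of all nonzero Laurent polynomials of the form R(A, A^{c₁},...,A^{cₙ}) with c₁,...,cₙ ∈ ℤ. Then there exists C > 0 such that every ζ ∈ ℱ satisfies |ζ| ≤ C. -/

import Mathlib

open scoped BigOperators

open LaurentPolynomial Finset

noncomputable def l1 (f : LaurentPolynomial ℤ) : ℝ := ∑ e ∈ f.coeff.support, |((f.coeff e : ℤ) : ℝ)|

lemma l1_nonneg (f : LaurentPolynomial ℤ) : 0 ≤ l1 f :=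
  Finset.sum_nonneg fun _ _ => abs_nonneg _

lemma l1_eq_of_subset (f : LaurentPolynomial ℤ) {s : Finset ℤ} (h : f.coeff.support ⊆ s) :
    l1 f = ∑ e ∈ s, |((f.coeff e : ℤ) : ℝ)| := by
  refine Finset.sum_subset h fun x _ hx => ?_
  simp [Finsupp.notMem_support_iff.mp hx]

lemma l1_add (f g : LaurentPolynomial ℤ) : l1 (f + g) ≤ l1 f + l1 g := by
  have hs : (f + g).coeff.support ⊆ f.coeff.support ∪ g.coeff.support := Finsupp.support_add
  rw [l1_eq_of_subset (f + g) hs, l1_eq_of_subset f (Finset.subset_union_left),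
    l1_eq_of_subset g (Finset.subset_union_right), ← Finset.sum_add_distrib]
  refine Finset.sum_le_sum fun e _ => ?_
  have h2 : (f + g).coeff e = f.coeff e + g.coeff e := Finsupp.add_apply f.coeff g.coeff e
  rw [h2]
  push_cast
  exact abs_add_le _ _

lemma l1_sum {α : Type*} (s : Finset α) (g : α → LaurentPolynomial ℤ) :
    l1 (∑ a ∈ s, g a) ≤ ∑ a ∈ s, l1 (g a) := by
  classical
  induction s using Finset.induction with
  | empty => simp [l1]
  | insert a s h ih =>
    rw [Finset.sum_insert h, Finset.sum_insert h]
    exact (l1_add _ _).trans (by linarith)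

lemma l1_mul_T (f : LaurentPolynomial ℤ) (k : ℤ) : l1 (f * T k) = l1 f := by
  have hcoeff : ∀ e : ℤ, ((f * T k : LaurentPolynomial ℤ)).coeff e = f.coeff (e - k) := fun e => by
    simpa [sub_eq_add_neg] using AddMonoidAlgebra.coeff_mul_single_apply f (1 : ℤ) k e
  have hsupp : (f * T k).coeff.support = f.coeff.support.map (addRightEmbedding k) := by
    ext e
    constructor
    · intro he
      have h' : f.coeff (e - k) ≠ 0 := by rw [← hcoeff e]; exact Finsupp.mem_support_iff.mp he
      exact Finset.mem_map.mpr ⟨e - k, Finsupp.mem_support_iff.mpr h',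
        by simp [addRightEmbedding_apply]⟩
    · intro he
      obtain ⟨a, ha, rfl⟩ := Finset.mem_map.mp he
      apply Finsupp.mem_support_iff.mpr
      rw [hcoeff]
      simpa [addRightEmbedding_apply] using Finsupp.mem_support_iff.mp ha
  rw [l1, hsupp, Finset.sum_map]
  refine Finset.sum_congr rfl fun a _ => ?_
  rw [hcoeff]
  simp [addRightEmbedding_apply]

lemma T_prod {α : Type*} (s : Finset α) (k : α → ℤ) :
    (∏ a ∈ s, (T (k a) : LaurentPolynomial ℤ)) = T (∑ a ∈ s, k a) := by
  classical
  induction s using Finset.induction with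
  | empty => simp
  | insert a s h ih => rw [Finset.prod_insert h, Finset.sum_insert h, T_add, ih]

theorem stmt6 (n : ℕ) (R : MvPolynomial (Fin n) (LaurentPolynomial ℤ)) :
    ∃ C : ℝ, 0 < C ∧ ∀ ζ : ℂ, ζ ≠ 0 →
      (∃ c : Fin n → ℤ,
        MvPolynomial.eval (fun i => LaurentPolynomial.T (c i)) R ≠ 0 ∧
        ∑ e ∈ (MvPolynomial.eval (fun i => LaurentPolynomial.T (c i)) R).coeff.support,
          ((MvPolynomial.eval (fun i => LaurentPolynomial.T (c i)) R).coeff e : ℂ) * ζ ^ e = 0) →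
      ‖ζ‖ ≤ C := by
  classical
  set B : ℝ := ∑ m ∈ R.support, l1 (MvPolynomial.coeff m R) with hB
  have hB0 : 0 ≤ B := Finset.sum_nonneg fun _ _ => l1_nonneg _
  refine ⟨B + 1, by linarith, ?_⟩
  rintro ζ hζ ⟨c, hf0, hroot⟩
  set f : LaurentPolynomial ℤ := MvPolynomial.eval (fun i => LaurentPolynomial.T (c i)) R with hfdef
  -- l1 bound on f
  have hl1 : l1 f ≤ B := by
    have : f = ∑ m ∈ R.support,
        MvPolynomial.coeff m R * T (∑ i ∈ m.support, (m i : ℤ) * c i) := by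
      rw [hfdef, MvPolynomial.eval_eq]
      refine Finset.sum_congr rfl fun m _ => ?_
      congr 1
      calc (∏ i ∈ m.support, T (c i) ^ m i)
          = ∏ i ∈ m.support, (T ((m i : ℤ) * c i) : LaurentPolynomial ℤ) := by
            refine Finset.prod_congr rfl fun i _ => ?_
            rw [T_pow]
        _ = T (∑ i ∈ m.support, (m i : ℤ) * c i) := T_prod _ _
    rw [this]
    refine (l1_sum _ _).trans ?_
    rw [hB]
    refine Finset.sum_le_sum fun m _ => ?_
    rw [l1_mul_T]
  -- by contradiction
  by_contra hgt
  push_neg at hgt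
  have h1 : (1 : ℝ) ≤ ‖ζ‖ := by linarith
  -- leading exponent
  have hne : f.coeff.support.Nonempty := Finsupp.support_nonempty_iff.mpr (fun h => hf0 (AddMonoidAlgebra.coeff_eq_zero.mp h))
  set d : ℤ := f.coeff.support.max' hne with hd
  have hdmem : d ∈ f.coeff.support := f.coeff.support.max'_mem hne
  have hdle : ∀ e ∈ f.coeff.support, e ≤ d := fun e he => f.coeff.support.le_max' e he
  have hfd : (1 : ℝ) ≤ |((f.coeff d : ℤ) : ℝ)| := by
    have : f.coeff d ≠ 0 := Finsupp.mem_support_iff.mp hdmem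
    have : (1 : ℤ) ≤ |f.coeff d| := Int.one_le_abs (by simpa using this)
    calc (1:ℝ) ≤ ((|f.coeff d| : ℤ) : ℝ) := by exact_mod_cast this
      _ = |((f.coeff d : ℤ) : ℝ)| := by push_cast; ring
  -- split sum
  have hsplit : ((f.coeff d : ℤ) : ℂ) * ζ ^ d = -∑ e ∈ f.coeff.support.erase d, ((f.coeff e : ℤ) : ℂ) * ζ ^ e := by
    have h := hroot
    rw [← Finset.add_sum_erase _ _ hdmem] at h
    linear_combination h
  have habs : ‖ζ‖ ≠ 0 := by simpa using hζ
  have hpow : ∀ e : ℤ, ‖ζ ^ e‖ = ‖ζ‖ ^ e := fun e => norm_zpow _ _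
  have hkey : ‖ζ‖ ^ d ≤ B * ‖ζ‖ ^ (d - 1) := by
    calc ‖ζ‖ ^ d = 1 * ‖ζ‖ ^ d := (one_mul _).symm
      _ ≤ |((f.coeff d : ℤ) : ℝ)| * ‖ζ‖ ^ d := by
          apply mul_le_mul_of_nonneg_right hfd (zpow_nonneg (by positivity) _)
      _ = ‖((f.coeff d : ℤ) : ℂ) * ζ ^ d‖ := by
          rw [norm_mul, hpow]
          congr 1
          rw [Complex.norm_intCast]
      _ = ‖∑ e ∈ f.coeff.support.erase d, ((f.coeff e : ℤ) : ℂ) * ζ ^ e‖ := by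
          rw [hsplit, norm_neg]
      _ ≤ ∑ e ∈ f.coeff.support.erase d, ‖((f.coeff e : ℤ) : ℂ) * ζ ^ e‖ :=
          norm_sum_le _ _
      _ ≤ ∑ e ∈ f.coeff.support.erase d, |((f.coeff e : ℤ) : ℝ)| * ‖ζ‖ ^ (d - 1) := by
          refine Finset.sum_le_sum fun e he => ?_
          rw [norm_mul, hpow]
          have h1e : ‖ζ‖ ^ e ≤ ‖ζ‖ ^ (d - 1) := by
            apply zpow_le_zpow_right₀ h1
            have := hdle e (Finset.mem_of_mem_erase he)
            have hne' := Finset.ne_of_mem_erase he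
            omega
          have : ‖((f.coeff e : ℤ) : ℂ)‖ = |((f.coeff e : ℤ) : ℝ)| := by
            rw [Complex.norm_intCast]
          rw [this]
          exact mul_le_mul_of_nonneg_left h1e (abs_nonneg _)
      _ = (∑ e ∈ f.coeff.support.erase d, |((f.coeff e : ℤ) : ℝ)|) * ‖ζ‖ ^ (d - 1) := by
          rw [Finset.sum_mul]
      _ ≤ B * ‖ζ‖ ^ (d - 1) := by
          apply mul_le_mul_of_nonneg_right _ (zpow_nonneg (by positivity) _)
          refine le_trans ?_ hl1
          exact Finset.sum_le_sum_of_subset_of_nonneg (Finset.erase_subset _ _)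
            (fun _ _ _ => abs_nonneg _)
  have hzd : ‖ζ‖ ^ d = ‖ζ‖ ^ (d - 1) * ‖ζ‖ := by
    rw [← zpow_add_one₀ habs]; ring_nf
  have hpos : (0 : ℝ) < ‖ζ‖ ^ (d - 1) := zpow_pos (by linarith) _
  have : ‖ζ‖ ≤ B := by
    rw [hzd, mul_comm B _] at hkey
    exact le_of_mul_le_mul_left hkey hpos
  linarith
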